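/- If {λ_n} is a convex real sequence (Δ²λ_n ≥ 0 for all n) such that Σ λ_n/n converges, then {λ_n} ∈ BV (i.e., Σ |λ_n - λ_{n+1}| < ∞) and λ_{n+1} = O(λ_n). -/

import Mathlib

open Filter Finset

theorem convex_seq_BV_and_ratio_bounded
    (lam : ℕ → ℝ)
    (hconv : ∀ n : ℕ, lam n - 2 * lam (n + 1) + lam (n + 2) ≥ 0)
    (hsum : ∃ L : ℝ, Filter.Tendsto
      (fun N : ℕ => ∑ n ∈ Finset.Icc 1 N, lam n / n) Filter.atTop (nhds L)) :
    (Summable fun n => |lam n - lam (n + 1)|) ∧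
    (∃ C : ℝ, ∀ n : ℕ, 1 ≤ n → |lam (n + 1)| ≤ C * |lam n|) := by
  obtain ⟨L, hS⟩ := hsum
  set S : ℕ → ℝ := fun N => ∑ n ∈ Finset.Icc 1 N, lam n / n with hSdef
  -- the difference sequence is antitone
  have hanti : Antitone (fun n => lam n - lam (n + 1)) := by
    apply antitone_nat_of_succ_le
    intro n
    have := hconv n
    show lam (n+1) - lam (n+2) ≤ lam n - lam (n+1)
    linarith
  -- the terms lam n / n tend to 0
  have hstep : ∀ N : ℕ, S (N + 1) - S N = lam (N + 1) / (N + 1) := by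
    intro N
    have : Finset.Icc 1 (N + 1) = insert (N + 1) (Finset.Icc 1 N) := by
      ext x; simp [Finset.mem_Icc]; omega
    rw [hSdef]
    simp only
    rw [this, Finset.sum_insert (by simp)]
    push_cast
    ring
  have hterm : Tendsto (fun m : ℕ => lam m / m) atTop (nhds 0) := by
    rw [← tendsto_add_atTop_iff_nat 1]
    have : Tendsto (fun N => S (N + 1) - S N) atTop (nhds (L - L)) :=
      (hS.comp (tendsto_add_atTop_nat 1)).sub hS
    simp only [sub_self] at this
    refine this.congr fun N => ?_
    rw [hstep N]
    push_cast
    rfl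
  -- lam is antitone
  have hdec : ∀ n : ℕ, lam (n + 1) ≤ lam n := by
    intro n
    by_contra hcon
    push_neg at hcon
    set e : ℝ := lam (n + 1) - lam n with he
    have he0 : 0 < e := by simp [he]; linarith
    have grow : ∀ m, n ≤ m → lam n + ((m - n : ℕ) : ℝ) * e ≤ lam m := by
      intro m hm
      induction m, hm using Nat.le_induction with
      | base => simp
      | succ m hm ih =>
        have h1 : lam m - lam (m + 1) ≤ lam n - lam (n + 1) := hanti hm
        have h2 : ((m + 1 - n : ℕ) : ℝ) = ((m - n : ℕ) : ℝ) + 1 := by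
          have : m + 1 - n = (m - n) + 1 := by omega
          rw [this]; push_cast; ring
        rw [h2]
        have : lam m + e ≤ lam (m + 1) := by simp [he] at h1 ⊢; linarith
        nlinarith
    -- choose a large m giving a contradiction
    have hev1 : ∀ᶠ m : ℕ in atTop, lam m / m < e / 2 := by
      have := hterm.eventually (gt_mem_nhds (show (0:ℝ) < e / 2 by linarith))
      exact this
    have hev2 : ∀ᶠ m : ℕ in atTop, (2 * (n * e - lam n) / e : ℝ) < m :=
      tendsto_natCast_atTop_atTop.eventually_gt_atTop _
    have hev3 : ∀ᶠ m : ℕ in atTop, n ≤ m ∧ 1 ≤ m := by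
      filter_upwards [eventually_ge_atTop (max n 1)] with m hm
      exact ⟨le_trans (le_max_left _ _) hm, le_trans (le_max_right _ _) hm⟩
    obtain ⟨m, h1, h2, h3, h4⟩ := (hev1.and (hev2.and hev3)).exists
    have hmpos : (0:ℝ) < m := by positivity
    have hg := grow m h3
    have hcast : ((m - n : ℕ) : ℝ) = (m : ℝ) - n := by
      rw [Nat.cast_sub h3]
    rw [hcast] at hg
    have hlt : lam m < e / 2 * m := by
      rw [div_lt_iff₀ hmpos] at h1; exact h1
    have h2' : 2 * (n * e - lam n) < m * e := by rwa [div_lt_iff₀ he0] at h2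
    nlinarith [hg, hlt, h2']
  have hmono : Antitone lam := antitone_nat_of_succ_le hdec
  -- lam is nonnegative
  have hnonneg : ∀ n : ℕ, 0 ≤ lam n := by
    intro N
    by_contra hneg
    push_neg at hneg
    -- harmonic sums diverge
    have hfull : Tendsto (fun M : ℕ => ∑ k ∈ Finset.Ioc 0 M, (1 : ℝ) / k) atTop atTop := by
      have h := Real.tendsto_sum_range_one_div_nat_succ_atTop
      refine h.congr fun M => ?_
      rw [← Finset.Icc_add_one_left_eq_Ioc, ← Finset.Ico_add_one_right_eq_Icc, Finset.sum_Ico_eq_sum_range]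
      simp [add_comm]
    have hH : Tendsto (fun M : ℕ => ∑ k ∈ Finset.Ioc N M, (1 : ℝ) / k) atTop atTop := by
      have : ∀ᶠ M : ℕ in atTop,
          (∑ k ∈ Finset.Ioc 0 M, (1 : ℝ) / k) - (∑ k ∈ Finset.Ioc 0 N, (1 : ℝ) / k)
            = ∑ k ∈ Finset.Ioc N M, (1 : ℝ) / k := by
        filter_upwards [eventually_ge_atTop N] with M hM
        rw [← Finset.sum_Ioc_consecutive _ (Nat.zero_le N) hM]
        ring
      exact Tendsto.congr' this (tendsto_atTop_add_const_right _ _ hfull)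
    -- S M ≤ S N + lam N * H M for M ≥ N
    have key : ∀ᶠ M : ℕ in atTop,
        S M ≤ S N + lam N * (∑ k ∈ Finset.Ioc N M, (1 : ℝ) / k) := by
      filter_upwards [eventually_ge_atTop N] with M hM
      have hsplit : S M = S N + ∑ k ∈ Finset.Ioc N M, lam k / k := by
        rw [hSdef]
        simp only [← Finset.Icc_add_one_left_eq_Ioc]
        rw [Finset.Icc_add_one_left_eq_Ioc, ← zero_add 1, Finset.Icc_add_one_left_eq_Ioc,
          ← Finset.sum_Ioc_consecutive _ (Nat.zero_le N) hM, Finset.Icc_add_one_left_eq_Ioc]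
      rw [hsplit, Finset.mul_sum]
      have : ∀ k ∈ Finset.Ioc N M, lam k / (k:ℝ) ≤ lam N * (1 / k) := by
        intro k hk
        simp only [Finset.mem_Ioc] at hk
        have hk0 : (0:ℝ) < k := by
          have : 0 < k := Nat.lt_of_le_of_lt (Nat.zero_le N) hk.1
          exact_mod_cast this
        have hlk : lam k ≤ lam N := hmono hk.1.le
        rw [div_eq_mul_one_div]
        exact mul_le_mul_of_nonneg_right hlk (by positivity)
      linarith [Finset.sum_le_sum this]
    have hatBot : Tendsto (fun M : ℕ => S N + lam N * (∑ k ∈ Finset.Ioc N M, (1 : ℝ) / k))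
        atTop atBot :=
      tendsto_atBot_add_const_left _ _ ((tendsto_const_mul_atBot_of_neg hneg).2 hH)
    exact not_tendsto_atBot_of_tendsto_nhds hS (tendsto_atBot_mono' _ key hatBot)
  -- Conclusion
  have hΔnonneg : ∀ n, 0 ≤ lam n - lam (n + 1) := fun n => sub_nonneg.mpr (hdec n)
  constructor
  · apply summable_of_sum_range_le (c := lam 0)
    · intro n; positivity
    · intro n
      have habs : ∀ i, |lam i - lam (i + 1)| = lam i - lam (i + 1) := fun i =>
        abs_of_nonneg (hΔnonneg i)
      calc ∑ i ∈ Finset.range n, |lam i - lam (i + 1)|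
          = ∑ i ∈ Finset.range n, (lam i - lam (i + 1)) := by
            exact Finset.sum_congr rfl fun i _ => habs i
        _ = lam 0 - lam n := by
            have := Finset.sum_range_sub (fun i => lam i) n
            have h2 : ∑ i ∈ Finset.range n, (lam i - lam (i+1))
                = -∑ i ∈ Finset.range n, (lam (i+1) - lam i) := by
              rw [← Finset.sum_neg_distrib]
              exact Finset.sum_congr rfl fun i _ => by ring
            rw [h2, this]; ring
        _ ≤ lam 0 := by linarith [hnonneg n]
  · refine ⟨1, fun n _ => ?_⟩
    rw [one_mul, abs_of_nonneg (hnonneg _), abs_of_nonneg (hnonneg _)]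
    exact hdec n
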